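/- If ties are P-null at U, then the choice-probability vector p(U) is a subgradient of g at U: for every U' ∈ ℝ^A, g(U') ≥ g(U) + Σ_{a∈A} p_a(U)·(U'_a − U_a). -/

import Mathlib

open MeasureTheory

noncomputable section

variable {A : Type*} [Fintype A] [Nonempty A]

/-- The expected-maximum (social surplus) function
`g(U) = ∫ max_{a ∈ A} (U_a + ε_a) dP(ε)`. -/
def gfun (P : Measure (A → ℝ)) (U : A → ℝ) : ℝ :=
  ∫ ε, (Finset.univ.sup' Finset.univ_nonempty fun a => U a + ε a) ∂P

/-- The choice probability `p_a(U) = P({ε : U_a + ε_a > U_b + ε_b for all b ≠ a})`. -/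
def choiceProb (P : Measure (A → ℝ)) (U : A → ℝ) (a : A) : ℝ :=
  (P {ε | ∀ b, b ≠ a → U b + ε b < U a + ε a}).toReal

/-- `P` has full support: every nonempty open set has positive measure. -/
def FullSupport (P : Measure (A → ℝ)) : Prop :=
  ∀ s : Set (A → ℝ), IsOpen s → s.Nonempty → 0 < P s

/-- Ties are `P`-null at `U`: the event that the maximum of `a ↦ U_a + ε_a`
is attained at more than one alternative has probability zero. -/
def TiesNull (P : Measure (A → ℝ)) (U : A → ℝ) : Prop :=
  P {ε | ∃ a b : A, a ≠ b ∧ (∀ c, U c + ε c ≤ U a + ε a) ∧ (∀ c, U c + ε c ≤ U b + ε b)} = 0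

lemma meas_sup (P : Measure (A → ℝ)) (V : A → ℝ) :
    AEStronglyMeasurable (fun ε : A → ℝ => Finset.univ.sup' Finset.univ_nonempty fun a => V a + ε a) P := by
  have h : Measurable (Finset.univ.sup' Finset.univ_nonempty (fun a (ε : A → ℝ) => V a + ε a)) :=
    Finset.measurable_sup' _ fun a _ => by fun_prop
  have e : (fun ε : A → ℝ => Finset.univ.sup' Finset.univ_nonempty fun a => V a + ε a)
      = Finset.univ.sup' Finset.univ_nonempty (fun a (ε : A → ℝ) => V a + ε a) := by
    funext ε; rw [Finset.sup'_apply]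
  rw [e]; exact h.aestronglyMeasurable

lemma int_sup (P : Measure (A → ℝ)) [IsProbabilityMeasure P]
    (hint : Integrable (fun ε : A → ℝ =>
      Finset.univ.sup' Finset.univ_nonempty fun a => |ε a|) P) (V : A → ℝ) :
    Integrable (fun ε : A → ℝ => Finset.univ.sup' Finset.univ_nonempty fun a => V a + ε a) P := by
  set C : ℝ := Finset.univ.sup' Finset.univ_nonempty fun a => |V a| with hC
  have hbig : Integrable (fun ε : A → ℝ =>
      C + Finset.univ.sup' Finset.univ_nonempty fun a => |ε a|) P :=
    (integrable_const C).add hint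
  refine hbig.mono (meas_sup P V) ?_
  filter_upwards with ε
  have key : |Finset.univ.sup' Finset.univ_nonempty fun a => V a + ε a|
      ≤ C + Finset.univ.sup' Finset.univ_nonempty fun a => |ε a| := by
    rw [abs_le]
    constructor
    · obtain ⟨a⟩ := (inferInstance : Nonempty A)
      have h0 : V a + ε a ≤ Finset.univ.sup' Finset.univ_nonempty fun a => V a + ε a :=
        Finset.le_sup' (fun a => V a + ε a) (Finset.mem_univ a)
      have hVa : -(|V a|) ≤ V a := neg_abs_le _
      have hea : -(|ε a|) ≤ ε a := neg_abs_le _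
      have h3 : |V a| ≤ C := Finset.le_sup' (fun a => |V a|) (Finset.mem_univ a)
      have h4 : |ε a| ≤ Finset.univ.sup' Finset.univ_nonempty fun a => |ε a| :=
        Finset.le_sup' (fun a => |ε a|) (Finset.mem_univ a)
      linarith
    · apply Finset.sup'_le
      intro a _
      have h3 : |V a| ≤ C := Finset.le_sup' (fun a => |V a|) (Finset.mem_univ a)
      have h4 : |ε a| ≤ Finset.univ.sup' Finset.univ_nonempty fun a => |ε a| :=
        Finset.le_sup' (fun a => |ε a|) (Finset.mem_univ a)
      have := le_abs_self (V a); have := le_abs_self (ε a)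
      linarith
  calc ‖Finset.univ.sup' Finset.univ_nonempty fun a => V a + ε a‖
      = |Finset.univ.sup' Finset.univ_nonempty fun a => V a + ε a| := Real.norm_eq_abs _
    _ ≤ C + Finset.univ.sup' Finset.univ_nonempty fun a => |ε a| := key
    _ ≤ ‖C + Finset.univ.sup' Finset.univ_nonempty fun a => |ε a|‖ := le_abs_self _

theorem stmt6 (P : Measure (A → ℝ)) [IsProbabilityMeasure P]
    (hint : Integrable (fun ε : A → ℝ =>
      Finset.univ.sup' Finset.univ_nonempty fun a => |ε a|) P)
    (U : A → ℝ) (hties : TiesNull P U) :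
    ∀ U' : A → ℝ, gfun P U' ≥ gfun P U + ∑ a, choiceProb P U a * (U' a - U a) := by
  intro U'
  set S : A → Set (A → ℝ) := fun a => {ε | ∀ b, b ≠ a → U b + ε b < U a + ε a} with hS
  have hSm : ∀ a, MeasurableSet (S a) := by
    intro a
    have : S a = ⋂ b, ⋂ (_ : b ≠ a), {ε : A → ℝ | U b + ε b < U a + ε a} := by
      ext ε; simp [hS, Set.mem_iInter]
    rw [this]
    exact MeasurableSet.iInter fun b => MeasurableSet.iInter fun _ =>
      measurableSet_lt (by fun_prop) (by fun_prop)
  -- the integrand with indicators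
  set f : (A → ℝ) → ℝ := fun ε =>
    (Finset.univ.sup' Finset.univ_nonempty fun a => U a + ε a)
      + ∑ a, (S a).indicator (fun _ => U' a - U a) ε with hf
  have hind : ∀ a : A, Integrable ((S a).indicator (fun _ => U' a - U a)) P := fun a =>
    (integrable_const _).indicator (hSm a)
  have hfint : Integrable f P :=
    (int_sup P hint U).add (integrable_finset_sum _ fun a _ => hind a)
  have hintegral : ∫ ε, f ε ∂P = gfun P U + ∑ a, choiceProb P U a * (U' a - U a) := by
    rw [hf, integral_add (int_sup P hint U) (integrable_finset_sum _ fun a _ => hind a),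
      integral_finset_sum _ fun a _ => hind a]
    congr 1
    apply Finset.sum_congr rfl
    intro a _
    rw [integral_indicator_const _ (hSm a), smul_eq_mul]
    rfl
  -- pointwise a.e. inequality
  have hae : ∀ᵐ ε ∂P, f ε ≤ Finset.univ.sup' Finset.univ_nonempty fun a => U' a + ε a := by
    have hT : ∀ᵐ ε ∂P, ε ∉ {ε : A → ℝ | ∃ a b : A, a ≠ b ∧ (∀ c, U c + ε c ≤ U a + ε a)
        ∧ (∀ c, U c + ε c ≤ U b + ε b)} := by
      rw [ae_iff]
      simpa [TiesNull] using hties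
    filter_upwards [hT] with ε hε
    obtain ⟨a, -, ha⟩ := Finset.exists_mem_eq_sup' (s := (Finset.univ : Finset A))
      (H := Finset.univ_nonempty) (fun a => U a + ε a)
    have hmax : ∀ c, U c + ε c ≤ U a + ε a := by
      intro c; rw [← ha]; exact Finset.le_sup' (fun a => U a + ε a) (Finset.mem_univ c)
    have haS : ε ∈ S a := by
      intro b hb
      rcases lt_or_eq_of_le (hmax b) with h | h
      · exact h
      · exfalso
        exact hε ⟨a, b, Ne.symm hb, hmax, fun c => le_of_le_of_eq (hmax c) h.symm⟩
    have hdisj : ∀ c, c ≠ a → ε ∉ S c := by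
      intro c hc hcS
      exact lt_irrefl _ (lt_trans (haS c hc) (hcS a (Ne.symm hc)))
    have hsum : ∑ c, (S c).indicator (fun _ => U' c - U c) ε = U' a - U a := by
      rw [Finset.sum_eq_single a]
      · rw [Set.indicator_of_mem haS]
      · intro c _ hc
        rw [Set.indicator_of_notMem (hdisj c hc)]
      · intro h; exact absurd (Finset.mem_univ a) h
    rw [hf]
    simp only []
    rw [hsum, ha]
    have : U a + ε a + (U' a - U a) = U' a + ε a := by ring
    rw [this]
    exact Finset.le_sup' (fun a => U' a + ε a) (Finset.mem_univ a)
  have := integral_mono_ae hfint (int_sup P hint U') hae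
  rw [hintegral] at this
  exact this


end
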